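/- arXiv:1312.3121 — 5 statements merged into one kernel-verified Lean document; each statement's English description precedes it below -/
import Mathlib

section
/- If X ≪_i Y ≪_i Z for some i ∈ [n], where X, Y, Z are subsets of [n] of the same cardinality and X and Z are weakly separated, then X ≪_i Z. -/
open Finset

variable {n : ℕ}

/-- Position of `x` in the cyclic order on `Fin n` starting at `i`. -/
def cpos (i x : Fin n) : ℕ := ((x - i : Fin n) : ℕ)

/-- `X ≪_i Y`: every element of `X \\ Y` precedes every element of `Y \\ X`
in the cyclic order starting at `i`. -/
def Ll (i : Fin n) (X Y : Finset (Fin n)) : Prop :=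
  ∀ x ∈ X \ Y, ∀ y ∈ Y \ X, cpos i x < cpos i y

/-- `X` and `Y` are weakly separated. -/
def WSep (X Y : Finset (Fin n)) : Prop := ∃ i : Fin n, Ll i X Y

private lemma shift_mod {n c t : ℕ} (ht : t < n) :
    (t + c % n) % n = t + c % n ∧ t + c % n < n ∨
      (t + c % n) % n + n = t + c % n ∧ (t + c % n) % n < n := by
  have hc : c % n < n := Nat.mod_lt _ (by omega)
  rcases lt_or_ge (t + c % n) n with h | h
  · exact Or.inl ⟨Nat.mod_eq_of_lt h, h⟩
  · right
    rw [Nat.mod_eq_sub_mod h, Nat.mod_eq_of_lt (by omega)]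
    omega

private lemma key_arith {n c a' b a b' : ℕ} (ha' : a' < n) (hb : b < n)
    (ha : a < n) (hb' : b' < n)
    (o1 : a' < b) (o2 : b < a) (o3 : a < b')
    (g1 : (a + c) % n < (b + c) % n) (g2 : (a' + c) % n < (b' + c) % n) : False := by
  rw [Nat.add_mod a c, Nat.add_mod b c, Nat.mod_eq_of_lt ha, Nat.mod_eq_of_lt hb] at g1
  rw [Nat.add_mod a' c, Nat.add_mod b' c, Nat.mod_eq_of_lt ha', Nat.mod_eq_of_lt hb'] at g2
  have m1 := shift_mod (c := c) ha
  have m2 := shift_mod (c := c) hb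
  have m3 := shift_mod (c := c) ha'
  have m4 := shift_mod (c := c) hb'
  omega

private lemma four_alt {n : ℕ} (i : Fin n) (X Z : Finset (Fin n)) (x' z x z' : Fin n)
    (hx' : x' ∈ X \ Z) (hz : z ∈ Z \ X) (hx : x ∈ X \ Z) (hz' : z' ∈ Z \ X)
    (o1 : cpos i x' < cpos i z) (o2 : cpos i z < cpos i x) (o3 : cpos i x < cpos i z')
    (hsep : WSep X Z) : False := by
  obtain ⟨j, hj⟩ := hsep
  haveI : NeZero n := ⟨i.pos.ne'⟩
  have g1 := hj x hx z hz
  have g2 := hj x' hx' z' hz'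
  have key : ∀ w : Fin n, cpos j w = (cpos i w + cpos j i) % n := by
    intro w
    have hw : w - j = (w - i) + (i - j) := by
      rw [sub_add_sub_cancel]
    simp only [cpos, hw, Fin.val_add]
  rw [key x, key z] at g1
  rw [key x', key z'] at g2
  exact key_arith (Fin.is_lt _) (Fin.is_lt _) (Fin.is_lt _) (Fin.is_lt _) o1 o2 o3 g1 g2

private lemma cpos_inj {n : ℕ} (i : Fin n) {a b : Fin n} (h : cpos i a = cpos i b) :
    a = b := by
  haveI : NeZero n := ⟨i.pos.ne'⟩
  have : a - i = b - i := Fin.val_injective h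
  exact sub_left_injective this

private lemma sdiff_nonempty_of_card_eq {n : ℕ} {A B : Finset (Fin n)}
    (h : A.card = B.card) (hB : (B \ A).Nonempty) : (A \ B).Nonempty := by
  rw [← Finset.card_pos, Finset.card_sdiff_comm h, Finset.card_pos]
  exact hB

/-- Lemma 1: if `X ≪_i Y ≪_i Z`, the three sets have the same cardinality, and
`X`, `Z` are weakly separated, then `X ≪_i Z`. -/
theorem ll_trans_of_wsep (i : Fin n) (X Y Z : Finset (Fin n))
    (hXY : X.card = Y.card) (hYZ : Y.card = Z.card)
    (h1 : Ll i X Y) (h2 : Ll i Y Z) (hsep : WSep X Z) :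
    Ll i X Z := by
  intro x hx z hz
  by_contra hlt
  push_neg at hlt
  simp only [Finset.mem_sdiff] at hx hz
  have hne : x ≠ z := fun h => hx.2 (h ▸ hz.1)
  have hzx : cpos i z < cpos i x := by
    rcases lt_or_eq_of_le hlt with h | h
    · exact h
    · exact absurd (cpos_inj i h) hne.symm
  by_cases hxY : x ∈ Y
  · by_cases hzY : z ∈ Y
    · -- case c: x ∈ Y, z ∈ Y
      have hxYZ : x ∈ Y \ Z := Finset.mem_sdiff.mpr ⟨hxY, hx.2⟩
      have hzYX : z ∈ Y \ X := Finset.mem_sdiff.mpr ⟨hzY, hz.2⟩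
      obtain ⟨z', hz'⟩ : (Z \ Y).Nonempty :=
        sdiff_nonempty_of_card_eq hYZ.symm ⟨x, hxYZ⟩
      obtain ⟨x', hx'⟩ : (X \ Y).Nonempty :=
        sdiff_nonempty_of_card_eq hXY ⟨z, hzYX⟩
      have e1 : cpos i x < cpos i z' := h2 x hxYZ z' hz'
      have e2 : cpos i x' < cpos i z := h1 x' hx' z hzYX
      have hz'X : z' ∉ X := by
        intro hz'X
        have : cpos i z' < cpos i z :=
          h1 z' (Finset.mem_sdiff.mpr ⟨hz'X, (Finset.mem_sdiff.mp hz').2⟩) z hzYX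
        omega
      have hx'Z : x' ∉ Z := by
        intro hx'Z
        have : cpos i x < cpos i x' :=
          h2 x hxYZ x' (Finset.mem_sdiff.mpr ⟨hx'Z, (Finset.mem_sdiff.mp hx').2⟩)
        omega
      exact four_alt i X Z x' z x z'
        (Finset.mem_sdiff.mpr ⟨(Finset.mem_sdiff.mp hx').1, hx'Z⟩)
        (Finset.mem_sdiff.mpr ⟨hz.1, hz.2⟩)
        (Finset.mem_sdiff.mpr ⟨hx.1, hx.2⟩)
        (Finset.mem_sdiff.mpr ⟨(Finset.mem_sdiff.mp hz').1, hz'X⟩)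
        e2 hzx e1 hsep
    · -- x ∈ Y, z ∉ Y
      have : cpos i x < cpos i z :=
        h2 x (Finset.mem_sdiff.mpr ⟨hxY, hx.2⟩) z (Finset.mem_sdiff.mpr ⟨hz.1, hzY⟩)
      omega
  · by_cases hzY : z ∈ Y
    · -- x ∉ Y, z ∈ Y
      have : cpos i x < cpos i z :=
        h1 x (Finset.mem_sdiff.mpr ⟨hx.1, hxY⟩) z (Finset.mem_sdiff.mpr ⟨hzY, hz.2⟩)
      omega
    · -- case d: x ∉ Y, z ∉ Y
      have hxXY : x ∈ X \ Y := Finset.mem_sdiff.mpr ⟨hx.1, hxY⟩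
      have hzZY : z ∈ Z \ Y := Finset.mem_sdiff.mpr ⟨hz.1, hzY⟩
      obtain ⟨y, hy⟩ : (Y \ Z).Nonempty :=
        sdiff_nonempty_of_card_eq hYZ ⟨z, hzZY⟩
      obtain ⟨y2, hy2⟩ : (Y \ X).Nonempty :=
        sdiff_nonempty_of_card_eq hXY.symm ⟨x, hxXY⟩
      have e1 : cpos i y < cpos i z := h2 y hy z hzZY
      have e2 : cpos i x < cpos i y2 := h1 x hxXY y2 hy2
      have hyX : y ∈ X := by
        by_contra hyX
        have : cpos i x < cpos i y :=
          h1 x hxXY y (Finset.mem_sdiff.mpr ⟨(Finset.mem_sdiff.mp hy).1, hyX⟩)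
        omega
      have hy2Z : y2 ∈ Z := by
        by_contra hy2Z
        have : cpos i y2 < cpos i z :=
          h2 y2 (Finset.mem_sdiff.mpr ⟨(Finset.mem_sdiff.mp hy2).1, hy2Z⟩) z hzZY
        omega
      exact four_alt i X Z y z x y2
        (Finset.mem_sdiff.mpr ⟨hyX, (Finset.mem_sdiff.mp hy).2⟩)
        (Finset.mem_sdiff.mpr ⟨hz.1, hz.2⟩)
        (Finset.mem_sdiff.mpr ⟨hx.1, hx.2⟩)
        (Finset.mem_sdiff.mpr ⟨hy2Z, (Finset.mem_sdiff.mp hy2).2⟩)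
        e1 hzx e2 hsep
end

section
/- For subsets X, Y of [n] of the same cardinality, X ≪_i Y holds for some i ∈ [n] if and only if Y ≪_j X holds for some j ∈ [n]; consequently, the weak separation relation on r-element subsets of [n] is symmetric. -/
open Finset

variable {n : ℕ}

lemma sub_val' (a b : Fin n) :
    ((a - b : Fin n) : ℕ) = if (b : ℕ) ≤ (a : ℕ) then (a : ℕ) - b else (a : ℕ) + n - b := by
  have ha := a.is_lt
  have hb := b.is_lt
  rw [Fin.sub_def]
  simp only
  split
  · have h1 : (n - (b : ℕ)) + a = ((a : ℕ) - b) + n := by omega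
    rw [h1, Nat.add_mod_right, Nat.mod_eq_of_lt (by omega)]
  · have h1 : (n - (b : ℕ)) + a = (a : ℕ) + n - b := by omega
    rw [h1, Nat.mod_eq_of_lt (by omega)]

lemma cpos_lt (i x : Fin n) : cpos i x < n := (x - i).is_lt

lemma cpos_shift (i j z : Fin n) :
    cpos j z = if cpos i j ≤ cpos i z then cpos i z - cpos i j else cpos i z + n - cpos i j := by
  haveI : NeZero n := ⟨z.pos.ne'⟩
  have : z - j = (z - i) - (j - i) := (sub_sub_sub_cancel_right z j i).symm
  rw [cpos, this, sub_val']
  rfl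

lemma ll_forward {X Y : Finset (Fin n)} (i : Fin n) (hi : Ll i X Y) :
    ∃ j : Fin n, Ll j Y X := by
  rcases Finset.eq_empty_or_nonempty (Y \ X) with he | hne
  · exact ⟨i, fun y hy => by simp [he] at hy⟩
  · obtain ⟨y0, hy0, hmin⟩ := Finset.exists_min_image (Y \ X) (cpos i) hne
    refine ⟨y0, fun y hy x hx => ?_⟩
    have h1 : cpos i x < cpos i y0 := hi x hx y0 hy0
    have h2 : cpos i y0 ≤ cpos i y := hmin y hy
    have hyn := cpos_lt i y
    have hy0n := cpos_lt i y0
    rw [cpos_shift i y0 y, cpos_shift i y0 x, if_pos h2,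
      if_neg (by omega : ¬ cpos i y0 ≤ cpos i x)]
    omega

/-- `X ≪_i Y` for some `i` iff `Y ≪_j X` for some `j`; hence weak separation
is a symmetric relation. -/
theorem wsep_symm_iff (X Y : Finset (Fin n)) (h : X.card = Y.card) :
    (∃ i : Fin n, Ll i X Y) ↔ (∃ j : Fin n, Ll j Y X) := by
  constructor
  · rintro ⟨i, hi⟩; exact ll_forward i hi
  · rintro ⟨j, hj⟩; exact ll_forward j hj
end

section
/- The map π : [n] → [n] associated to a Grassmann necklace, sending i to the element π(i) with N_{i+1} = (N_i \ {i}) ∪ {π(i)}, is a bijection, under the assumption that i ∈ N_i for every i. -/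
open Finset

variable {n : ℕ} [NeZero n]

/-- A Grassmann necklace in `C([n], r)`. -/
def IsNecklace (N : Fin n → Finset (Fin n)) (r : ℕ) : Prop :=
  (∀ i, (N i).card = r) ∧ ∀ i, (N i).erase i ⊆ N (i + 1)

lemma fin_sub_val (a b : Fin n) : ((a - b : Fin n) : ℕ) =
    if b.val ≤ a.val then a.val - b.val else a.val + n - b.val := by
  have hb := b.isLt
  have ha := a.isLt
  rw [Fin.sub_def]
  simp only []
  split
  · next h =>
    have he : n - b.val + a.val = n + (a.val - b.val) := by omega
    rw [he, Nat.add_mod_left, Nat.mod_eq_of_lt (by omega)]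
  · next h =>
    rw [Nat.mod_eq_of_lt (by omega)]
    omega

lemma cpos_succ (a b : Fin n) (hne : a ≠ b) :
    cpos (b+1) a = ((a - b : Fin n) : ℕ) - 1 ∧ 1 ≤ ((a - b : Fin n) : ℕ) := by
  have h0 : a - b ≠ 0 := sub_ne_zero.mpr hne
  have h0' : ((a - b : Fin n) : ℕ) ≠ 0 := by
    intro h
    exact h0 (Fin.val_injective (by simpa using h))
  have hn1 : 1 < n := by
    by_contra h
    have hn : n = 1 := by have := NeZero.pos n; omega
    subst hn
    exact hne (Subsingleton.elim a b)
  have h1 : ((1 : Fin n) : ℕ) = 1 := by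
    rw [Fin.val_one'] ; exact Nat.mod_eq_of_lt hn1
  constructor
  · show ((a - (b+1) : Fin n) : ℕ) = _
    rw [sub_add_eq_sub_sub, fin_sub_val, h1, if_pos (by omega)]
  · omega

open Fin.NatCast Fin.CommRing in
lemma cyc (i j x : Fin n) (hij : i ≠ j) (hxi : x ≠ i) (hxj : x ≠ j) :
    cpos (i+1) j ≤ cpos (i+1) x ∨ cpos (j+1) i ≤ cpos (j+1) x := by
  obtain ⟨e1, g1⟩ := cpos_succ j i (Ne.symm hij)
  obtain ⟨e2, g2⟩ := cpos_succ x i hxi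
  obtain ⟨e3, g3⟩ := cpos_succ x j hxj
  obtain ⟨e4, g4⟩ := cpos_succ i j hij
  set u := ((j - i : Fin n) : ℕ) with hu'
  set v := ((x - i : Fin n) : ℕ) with hv'
  have hu : u < n := (j - i).isLt
  have hv : v < n := (x - i).isLt
  have hxj' : ((x - j : Fin n) : ℕ) = if u ≤ v then v - u else v + n - u := by
    have h : x - j = (x - i) - (j - i) := by ring
    rw [h, fin_sub_val]
  have hij' : ((i - j : Fin n) : ℕ) = n - u := by
    have h : i - j = (0 : Fin n) - (j - i) := by ring
    rw [h, fin_sub_val]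
    rw [if_neg (by rw [Fin.val_zero]; omega)]
    simp only [Fin.val_zero]
    omega
  have huv : u ≠ v := by
    intro h
    apply hxj
    have : (j - i : Fin n) = (x - i : Fin n) := Fin.val_injective h
    have := sub_left_injective this
    exact this.symm
  rw [e1, e2, e3, e4, hxj', hij']
  split_ifs with h
  · left; omega
  · right; omega

/-- The map `π` associated with a Grassmann necklace, sending `i` to the element
with `N_{i+1} = (N_i \\ {i}) ∪ {π(i)}`, is a bijection. -/
theorem necklace_perm_bijective (N : Fin n → Finset (Fin n)) (r : ℕ)
    (hN : IsNecklace N r) (hii : ∀ i, i ∈ N i)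
    (p : Fin n → Fin n)
    (hp : ∀ i, N (i + 1) = insert (p i) ((N i).erase i)) :
    Function.Bijective p := by
  obtain ⟨hcard, -⟩ := hN
  have hB : ∀ i, p i ∈ N i → p i = i := by
    intro i h
    by_contra hne
    have hmem : p i ∈ (N i).erase i := mem_erase.mpr ⟨hne, h⟩
    have h1 : N (i+1) = (N i).erase i := by rw [hp i, insert_eq_self.mpr hmem]
    have h2 : ((N i).erase i).card = r - 1 := by
      rw [card_erase_of_mem (hii i), hcard]
    have h3 : 0 < r := by
      have := card_pos.mpr ⟨i, hii i⟩
      rwa [hcard] at this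
    have h4 := hcard (i+1)
    rw [h1, h2] at h4
    omega
  have hC : ∀ (x k : Fin n), x ∈ N k → k ≠ x → x ∈ N (k+1) := by
    intro x k hx hk
    rw [hp k]
    exact mem_insert_of_mem (mem_erase.mpr ⟨Ne.symm hk, hx⟩)
  open Fin.NatCast Fin.CommRing in
  have hD : ∀ x, p x = x → ∀ k, x ∈ N k := by
    intro x hx k
    have key : ∀ t : ℕ, x ∈ N (x + (t : Fin n)) := by
      intro t
      induction t with
      | zero => simpa using hii x
      | succ m ih =>
        have he : (((m+1 : ℕ)) : Fin n) = (m : Fin n) + 1 := by push_cast; ring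
        rw [he, ← add_assoc]
        by_cases h : x + (m : Fin n) = x
        · rw [h, hp x, hx]
          exact mem_insert_self _ _
        · exact hC x _ ih h
    have hk := key ((k - x : Fin n) : ℕ)
    have he : x + (((k - x : Fin n) : ℕ) : Fin n) = k := by
      rw [Fin.cast_val_eq_self, add_comm, sub_add_cancel]
    rwa [he] at hk
  open Fin.NatCast Fin.CommRing in
  have hE : ∀ i x, p i = x → ∀ k, cpos (i+1) k ≤ cpos (i+1) x → x ∈ N k := by
    intro i x hpi k hk
    have key : ∀ t : ℕ, t ≤ cpos (i+1) x → x ∈ N (i + 1 + (t : Fin n)) := by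
      intro t
      induction t with
      | zero =>
        intro _
        simp only [Nat.cast_zero, add_zero]
        rw [hp i, hpi]
        exact mem_insert_self _ _
      | succ m ih =>
        intro hm
        have hxm : x ∈ N (i + 1 + (m : Fin n)) := ih (by omega)
        have hne : i + 1 + (m : Fin n) ≠ x := by
          intro h
          have hcp : cpos (i+1) x = ((m : Fin n) : ℕ) := by
            rw [← h]
            show ((i + 1 + (m : Fin n) - (i+1) : Fin n) : ℕ) = _
            rw [add_sub_cancel_left]
          rw [Fin.val_natCast] at hcp
          have := Nat.mod_le m n
          omega
        have := hC x _ hxm hne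
        have he : (((m+1 : ℕ)) : Fin n) = (m : Fin n) + 1 := by push_cast; ring
        rw [he, ← add_assoc]
        exact this
    have hk' := key (cpos (i+1) k) hk
    have he : i + 1 + ((cpos (i+1) k : ℕ) : Fin n) = k := by
      show i + 1 + (((k - (i+1) : Fin n) : ℕ) : Fin n) = k
      rw [Fin.cast_val_eq_self, add_comm, sub_add_cancel]
    rwa [he] at hk'
  rw [← Finite.injective_iff_bijective]
  intro i j hpij
  have hx : p i = p j := hpij
  by_cases hxi : p i ∈ N i
  · have hix : p i = i := hB i hxi
    have hiNj : i ∈ N j := hD i hix j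
    have hmem : p j ∈ N j := by rw [← hx, hix]; exact hiNj
    have hjx : p j = j := hB j hmem
    rw [← hix, hx, hjx]
  · by_cases hxj : p i ∈ N j
    · have hjx : p j = j := hB j (hx ▸ hxj)
      have hji : p i = j := by rw [hx, hjx]
      have hjNi : j ∈ N i := hD j hjx i
      rw [← hji] at hjNi
      exact absurd hjNi hxi
    · have hxi' : p i ≠ i := by intro h; rw [h] at hxi; exact hxi (hii i)
      have hxj' : p i ≠ j := by intro h; rw [h] at hxj; exact hxj (hii j)
      by_contra hne
      rcases cyc i j (p i) hne hxi' hxj' with h | h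
      · exact hxj (hE i (p i) rfl j h)
      · exact hxi (hE j (p i) hx.symm i h)
end

section
/- Let π be a permutation of [n] with associated Grassmann necklace N(π) (with i ∈ N_i for all i). If Y ∈ Int(N(π)), i ∈ Y, and (i, j) is an alignment of π, then j ∈ Y. (Interior sets are π-chamber sets.) -/
open Finset

variable {n : ℕ}

/-- The Grassmann necklace associated with a permutation `π`:
`N_i = { k : k ≤_i π⁻¹(k) }`. -/
def necklaceOf (π : Equiv.Perm (Fin n)) (i : Fin n) : Finset (Fin n) :=
  Finset.univ.filter fun k => cpos i k ≤ cpos i (π.symm k)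

/-- `(i, j)` is an alignment of `π`: the quadruple `π⁻¹(i), i, j, π⁻¹(j)`
occurs in this cyclic order (`j = π(j)` allowed, `i = π(i)` not). -/
def IsAlignment (π : Equiv.Perm (Fin n)) (i j : Fin n) : Prop :=
  0 < cpos (π.symm i) i ∧
  cpos (π.symm i) i < cpos (π.symm i) j ∧
  cpos (π.symm i) j ≤ cpos (π.symm i) (π.symm j)

/-- The interior of a necklace `N`: `r`-sets `X` with `N_i ≪_i X` for all `i`. -/
def Interior (r : ℕ) (N : Fin n → Finset (Fin n)) : Set (Finset (Fin n)) :=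
  {X | X.card = r ∧ ∀ i, Ll i (N i) X}

/-- Sets of the interior of `N(π)` are `π`-chamber sets: if `Y ∈ Int(N(π))`,
`i ∈ Y` and `(i, j)` is an alignment of `π`, then `j ∈ Y`. -/
theorem interior_chamber (π : Equiv.Perm (Fin n)) (r : ℕ)
    (Y : Finset (Fin n)) (hY : Y ∈ Interior r (necklaceOf π))
    (i j : Fin n) (ha : IsAlignment π i j) (hi : i ∈ Y) :
    j ∈ Y := by
  by_contra hj
  obtain ⟨ha1, ha2, ha3⟩ := ha
  have hLl := hY.2 (π.symm i)
  have hjN : j ∈ necklaceOf π (π.symm i) := by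
    simp only [necklaceOf, Finset.mem_filter, Finset.mem_univ, true_and]
    exact ha3
  have hiN : i ∉ necklaceOf π (π.symm i) := by
    simp only [necklaceOf, Finset.mem_filter, Finset.mem_univ, true_and]
    haveI : NeZero n := ⟨i.pos.ne'⟩
    have h0 : cpos (π.symm i) (π.symm i) = 0 := by
      simp [cpos, sub_self]
    omega
  have := hLl j (Finset.mem_sdiff.mpr ⟨hjN, hj⟩) i (Finset.mem_sdiff.mpr ⟨hi, hiN⟩)
  omega
end

section
/- Let π be a permutation of [n] with a simple alignment (i, j) where i = π(1), j = π(n), and let π' coincide with π except π'(1) = j, π'(n) = i. Then the set of alignments of π' equals the set of alignments of π with the single alignment (i, j) removed. -/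
open Finset

variable {n : ℕ}

lemma cpos_spec (u x : Fin n) :
    cpos u x < n ∧ (cpos u x + u.val = x.val ∨ cpos u x + u.val = x.val + n) := by
  have hn : 0 < n := u.pos
  have hx := x.isLt
  have hu := u.isLt
  unfold cpos
  rw [Fin.sub_def]
  simp only
  rcases Nat.lt_or_ge (n - u.val + x.val) n with hlt | hge
  · rw [Nat.mod_eq_of_lt hlt]; omega
  · rw [Nat.mod_eq_sub_mod hge, Nat.mod_eq_of_lt (by omega)]; omega


lemma swap_val [NeZero n] (a : Fin n) :
    ((Equiv.swap 1 0 a : Fin n).val = 0 ∧ a.val = (1:Fin n).val) ∨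
    ((Equiv.swap 1 0 a : Fin n).val = (1:Fin n).val ∧ a.val = 0) ∨
    ((Equiv.swap 1 0 a : Fin n).val = a.val ∧ a.val ≠ (1:Fin n).val ∧ a.val ≠ 0) := by
  by_cases h1 : a = 1
  · subst h1; rw [Equiv.swap_apply_left]; left; simp
  · by_cases h0 : a = 0
    · subst h0; rw [Equiv.swap_apply_right]; right; left; simp
    · rw [Equiv.swap_apply_of_ne_of_ne h1 h0]; right; right
      exact ⟨rfl, fun hh => h1 (Fin.ext (by simpa using hh)), fun hh => h0 (Fin.ext (by simpa using hh))⟩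

set_option maxHeartbeats 1000000 in
/-- Let `(i, j) = (π(1), π(n))` be a simple alignment of `π` (here `n ≡ 0`),
and let `π'` swap the two images: `π'(1) = j`, `π'(n) = i`. Then the set of
alignments of `π'` is the set of alignments of `π` with `(i, j)` removed. -/
theorem simple_alignment_swap [NeZero n] (π : Equiv.Perm (Fin n))
    (h : IsAlignment π (π 1) (π 0)) (k l : Fin n) :
    IsAlignment (π * Equiv.swap 1 0) k l ↔
      (IsAlignment π k l ∧ ¬(k = π 1 ∧ l = π 0)) := by
  have hsymm : ∀ x : Fin n, (π * Equiv.swap 1 0).symm x = Equiv.swap 1 0 (π.symm x) := by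
    intro x
    simp [Equiv.Perm.mul_def, Equiv.symm_trans_apply, Equiv.symm_swap]
  set a := π.symm k with ha
  set b := π.symm l with hb
  have e1 : a = 1 ↔ k = π 1 := Equiv.symm_apply_eq π
  have e2 : a = 0 ↔ k = π 0 := Equiv.symm_apply_eq π
  have e3 : b = 1 ↔ l = π 1 := Equiv.symm_apply_eq π
  have e4 : b = 0 ↔ l = π 0 := Equiv.symm_apply_eq π
  rw [IsAlignment, IsAlignment, hsymm k, hsymm l, ← ha, ← hb, ← e1, ← e4]
  simp only [IsAlignment, Equiv.symm_apply_apply] at h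
  have z : ((0:Fin n)).val = 0 := by simp
  have hp1 := (π 1).isLt
  have hp0 := (π 0).isLt
  -- preprocess h into val facts
  obtain ⟨hc1, hc2, hc3⟩ := h
  have H : 2 ≤ (π 1).val ∧ (π 1).val < n ∧ (1 : Fin n).val = 1 ∧
      ((π 0).val = 0 ∨ ((π 1).val < (π 0).val ∧ (π 0).val < n)) := by
    have s7 := cpos_spec (1 : Fin n) (π 1)
    have s8 := cpos_spec (1 : Fin n) (π 0)
    have s9 := cpos_spec (1 : Fin n) ((0 : Fin n))
    have v1 : (n = 1 ∧ (1 : Fin n).val = 0) ∨ (1 : Fin n).val = 1 := by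
      rcases n with _ | _ | m
      · exact absurd rfl (NeZero.ne 0)
      · left; exact ⟨rfl, rfl⟩
      · right; rfl
    have v2 : (1 : Fin n).val < n := (1 : Fin n).isLt
    omega
  clear hc1 hc2 hc3
  -- val-level links
  have f1 : a = 1 ↔ a.val = (1:Fin n).val := Fin.val_eq_val a 1 |>.symm
  have f4 : b = 0 ↔ b.val = 0 := by rw [Fin.ext_iff]; simp
  have g1 : a.val = (1:Fin n).val ↔ k.val = (π 1).val := by
    rw [Fin.val_eq_val, Fin.val_eq_val]; exact e1
  have g2 : a.val = (0:Fin n).val ↔ k.val = (π 0).val := by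
    rw [Fin.val_eq_val, Fin.val_eq_val]; exact e2
  have g3 : b.val = (1:Fin n).val ↔ l.val = (π 1).val := by
    rw [Fin.val_eq_val, Fin.val_eq_val]; exact e3
  have g4 : b.val = (0:Fin n).val ↔ l.val = (π 0).val := by
    rw [Fin.val_eq_val, Fin.val_eq_val]; exact e4
  have g5 : a.val = b.val ↔ k.val = l.val := by
    rw [Fin.val_eq_val, Fin.val_eq_val, ha, hb]
    exact ⟨fun hh => by simpa using congrArg π hh, fun hh => by rw [hh]⟩
  rw [f1, f4]
  clear e1 e2 e3 e4 f1 f4 hsymm ha hb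
  have s1 := cpos_spec (Equiv.swap 1 0 a) k
  have s2 := cpos_spec (Equiv.swap 1 0 a) l
  have s3 := cpos_spec (Equiv.swap 1 0 a) (Equiv.swap 1 0 b)
  have s4 := cpos_spec a k
  have s5 := cpos_spec a l
  have s6 := cpos_spec a b
  have w1 := swap_val (n := n) a
  have w2 := swap_val (n := n) b
  have hk := k.isLt
  have hl := l.isLt
  have ha' := a.isLt
  have hb' := b.isLt
  rcases w1 with ⟨q1, q2⟩ | ⟨q1, q2⟩ | ⟨q1, q2, q3⟩ <;>
    rcases w2 with ⟨r1, r2⟩ | ⟨r1, r2⟩ | ⟨r1, r2, r3⟩ <;>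
    omega
end
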